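/- arXiv:1711.03013 — 4 statements merged into one kernel-verified Lean document; each statement's English description precedes it below -/
import Mathlib

section
/- Let (B_t)_{t∈G} be a concrete Fell bundle over a group G in a C*-algebra L and let (X_t)_{t∈G} be a concrete right Hilbert (B_t)-bundle. If (X_t) is full, then for every r ∈ G the fiber B_r equals the closed linear span of {x*·y : x ∈ X_s, y ∈ X_{sr}, s ∈ G}. -/
/-- The closed linear span (over `ℂ`) of a set in a normed `ℂ`-algebra. -/
noncomputable def closedSpan {L : Type*} [NormedRing L] [NormedAlgebra ℂ L]
    (S : Set L) : Submodule ℂ L :=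
  (Submodule.span ℂ S).topologicalClosure

open scoped Topology

section Aux

variable {L : Type*} [NonUnitalCStarAlgebra L]

local notation "σₙ" => quasispectrum

/-- `cfcₙ f a` lies in any closed set `S` which contains `a` and is stable under the
algebraic operations. -/
lemma cfcn_mem_of_closed (S : Set L) (hS : IsClosed S)
    (h0 : (0 : L) ∈ S)
    (hadd : ∀ x ∈ S, ∀ y ∈ S, x + y ∈ S)
    (hsmul : ∀ (r : ℝ) (x : L), x ∈ S → r • x ∈ S)
    (hmul : ∀ x ∈ S, ∀ y ∈ S, x * y ∈ S)
    (hstar : ∀ x ∈ S, star x ∈ S)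
    (a : L) (haS : a ∈ S) (hsa : IsSelfAdjoint a)
    (f : ℝ → ℝ) : cfcₙ f a ∈ S := by
  refine cfcₙ_cases (· ∈ S) a f h0 fun hf hf0 ha ↦ ?_
  have hcont : Continuous (cfcₙHom (R := ℝ) ha) :=
    (cfcₙHom_isClosedEmbedding (R := ℝ) ha).continuous
  have hzero : ((0 : σₙ ℝ a) : ℝ) = 0 := rfl
  generalize (⟨⟨_, hf.restrict⟩, hf0⟩ : ContinuousMapZero (σₙ ℝ a) ℝ) = g
  induction g using ContinuousMapZero.induction_on_of_compact with
  | zero => simpa using h0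
  | id =>
      have hid : cfcₙHom (R := ℝ) ha (ContinuousMapZero.id (σₙ ℝ a)) = a := cfcₙHom_id ha
      rwa [hid]
  | star_id =>
      have hid : cfcₙHom (R := ℝ) ha (ContinuousMapZero.id (σₙ ℝ a)) = a := cfcₙHom_id ha
      rw [map_star, hid]
      exact hstar a haS
  | add f g hf hg => rw [map_add]; exact hadd _ hf _ hg
  | mul f g hf hg => rw [map_mul]; exact hmul _ hf _ hg
  | smul r f hf => rw [map_smul]; exact hsmul r _ hf
  | frequently f hf =>
      have hmem : f ∈ closure {g | cfcₙHom (R := ℝ) ha g ∈ S} :=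
        mem_closure_iff_frequently.mpr hf
      have hmt : Set.MapsTo (cfcₙHom (R := ℝ) ha) {g | cfcₙHom (R := ℝ) ha g ∈ S} S :=
        fun g hg ↦ hg
      have : cfcₙHom (R := ℝ) ha f ∈ closure S := map_mem_closure hcont hmem hmt
      rwa [hS.closure_eq] at this

set_option maxHeartbeats 1000000 in
/-- The key approximation: `f_ε(b b*) * b` is close to `b`, where
`f_ε x = x² / (x² + ε)`. -/
lemma approx_aux (b : L) {ε : ℝ} (hε : 0 < ε) :
    ‖b - cfcₙ (fun x : ℝ => x ^ 2 * (x ^ 2 + ε)⁻¹) (b * star b) * b‖ ^ 2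
      ≤ Real.sqrt ε / 2 := by
  set a : L := b * star b with ha_def
  have hsa : IsSelfAdjoint a := .mul_star_self b
  set f : ℝ → ℝ := fun x => x ^ 2 * (x ^ 2 + ε)⁻¹ with hf_def
  have hden : ∀ x : ℝ, x ^ 2 + ε ≠ 0 := fun x ↦ by positivity
  have hfc : Continuous f := by
    apply Continuous.mul (by fun_prop)
    exact (continuous_pow 2 |>.add continuous_const).inv₀ hden
  have hf0 : f 0 = 0 := by simp [hf_def]
  set c : L := cfcₙ f a with hc_def
  have hcsa : IsSelfAdjoint c := cfcₙ_predicate f a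
  set d : L := b - c * b with hd_def
  -- compute d * star d
  have hstar_d : star d = star b - star b * c := by
    rw [hd_def, star_sub, star_mul, hcsa.star_eq]
  have hdd : d * star d = a - a * c - c * a + c * (a * c) := by
    rw [hd_def, hstar_d, ha_def]
    noncomm_ring
  -- express the RHS as cfcₙ of a single function
  have hid : cfcₙ (id : ℝ → ℝ) a = a := cfcₙ_id ℝ a
  have h₁ : cfcₙ (fun x : ℝ => x * f x) a = a * c := by
    rw [cfcₙ_mul (fun x : ℝ => x) f a (continuous_id.continuousOn) rfl
      hfc.continuousOn hf0, cfcₙ_id' ℝ a]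
  have h₂ : cfcₙ (fun x : ℝ => f x * x) a = c * a := by
    rw [cfcₙ_mul f (fun x : ℝ => x) a hfc.continuousOn hf0
      (continuous_id.continuousOn) rfl, cfcₙ_id' ℝ a]
  have h₃ : cfcₙ (fun x : ℝ => f x * (x * f x)) a = c * (a * c) := by
    rw [cfcₙ_mul f (fun x : ℝ => x * f x) a hfc.continuousOn hf0
      ((continuous_id.mul hfc).continuousOn) (by simp [hf0]), h₁]
  have hsum : cfcₙ (fun x : ℝ => (x - x * f x - f x * x) + f x * (x * f x)) a
      = a - a * c - c * a + c * (a * c) := by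
    rw [cfcₙ_add (fun x : ℝ => x - x * f x - f x * x) (fun x : ℝ => f x * (x * f x)) a
      (by fun_prop) (by simp [hf0]) ((hfc.mul (continuous_id.mul hfc)).continuousOn)
      (by simp [hf0]),
      cfcₙ_sub (fun x : ℝ => x - x * f x) (fun x : ℝ => f x * x) a
      (by fun_prop) (by simp [hf0]) ((hfc.mul continuous_id).continuousOn) (by simp [hf0]),
      cfcₙ_sub (fun x : ℝ => x) (fun x : ℝ => x * f x) a
      (continuous_id.continuousOn) rfl ((continuous_id.mul hfc).continuousOn) (by simp [hf0]),
      cfcₙ_id' ℝ a, h₁, h₂, h₃]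
  -- pointwise bound
  have hbound : ∀ x : ℝ, |(x - x * f x - f x * x) + f x * (x * f x)| ≤ Real.sqrt ε / 2 := by
    intro x
    have hx : (x - x * f x - f x * x) + f x * (x * f x) = x * ε ^ 2 * ((x ^ 2 + ε) ^ 2)⁻¹ := by
      rw [hf_def]
      field_simp
      ring
    rw [hx]
    set s : ℝ := Real.sqrt ε with hs_def
    have hs : 0 < s := Real.sqrt_pos.mpr hε
    have hs2 : s ^ 2 = ε := Real.sq_sqrt hε.le
    rw [abs_mul, abs_mul, abs_inv, abs_of_nonneg (by positivity : (0:ℝ) ≤ ε ^ 2),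
      abs_of_nonneg (by positivity : (0:ℝ) ≤ (x ^ 2 + ε) ^ 2),
      mul_inv_le_iff₀ (by positivity)]
    have h1 : 2 * |x| * s ≤ x ^ 2 + s ^ 2 := by
      nlinarith [sq_nonneg (|x| - s), sq_abs x]
    have h2 : s ^ 2 ≤ x ^ 2 + s ^ 2 := by nlinarith [sq_nonneg x]
    have h3 : (2 * |x| * s) * s ^ 2 ≤ (x ^ 2 + s ^ 2) * (x ^ 2 + s ^ 2) :=
      mul_le_mul h1 h2 (by positivity) (by positivity)
    have key : 2 * |x| * ε ^ 2 ≤ s * (x ^ 2 + ε) ^ 2 := by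
      rw [← hs2]
      nlinarith [mul_le_mul_of_nonneg_left h3 hs.le]
    linarith [key]
  -- conclude
  have hnorm : ‖d * star d‖ ≤ Real.sqrt ε / 2 := by
    rw [hdd, ← hsum]
    exact norm_cfcₙ_le fun x _ ↦ by
      simpa [Real.norm_eq_abs] using hbound x
  calc ‖d‖ ^ 2 = ‖d * star d‖ := by rw [CStarRing.norm_self_mul_star]; ring
  _ ≤ Real.sqrt ε / 2 := hnorm

end Aux

set_option maxHeartbeats 1000000 in
/-- If `(X t)` is a full concrete right Hilbert `(B t)`-bundle over a concrete Fell
bundle `(B t)`, then each fiber `B r` is the closed linear span of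
`{x* ⬝ y : x ∈ X s, y ∈ X (s*r), s ∈ G}`. -/
theorem fiber_eq_closedSpan_of_full
    {G L : Type*} [Group G] [NormedRing L] [StarRing L] [CStarRing L]
    [NormedAlgebra ℂ L] [StarModule ℂ L] [CompleteSpace L]
    (B : G → Submodule ℂ L)
    (hBclosed : ∀ t : G, IsClosed (B t : Set L))
    (hBmul : ∀ r s : G, ∀ b ∈ B r, ∀ c ∈ B s, b * c ∈ B (r * s))
    (hBstar : ∀ t : G, ∀ b ∈ B t, star b ∈ B t⁻¹)
    (X : G → Submodule ℂ L)
    (hXclosed : ∀ t : G, IsClosed (X t : Set L))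
    (hXact : ∀ r s : G, ∀ x ∈ X r, ∀ b ∈ B s, x * b ∈ X (r * s))
    (hXinner : ∀ r s : G, ∀ x ∈ X r, ∀ y ∈ X s, star x * y ∈ B (r⁻¹ * s))
    (hfull : closedSpan {z : L | ∃ t : G, ∃ x ∈ X t, ∃ y ∈ X t, z = star x * y} = B 1) :
    ∀ r : G,
      B r = closedSpan {z : L | ∃ s : G, ∃ x ∈ X s, ∃ y ∈ X (s * r), z = star x * y} := by
  letI : NonUnitalCStarAlgebra L :=
    { toNonUnitalNormedRing := inferInstance
      toStarRing := inferInstance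
      toCompleteSpace := inferInstance
      toCStarRing := inferInstance
      toNormedSpace := inferInstance
      toIsScalarTower := inferInstance
      toSMulCommClass := inferInstance
      toStarModule := inferInstance }
  intro r
  set S : Set L := {z : L | ∃ s : G, ∃ x ∈ X s, ∃ y ∈ X (s * r), z = star x * y} with hS_def
  set T : Set L := {z : L | ∃ t : G, ∃ x ∈ X t, ∃ y ∈ X t, z = star x * y} with hT_def
  have hS_sub : S ⊆ (B r : Set L) := by
    rintro z ⟨s, x, hx, y, hy, rfl⟩
    have := hXinner s (s * r) x hx y hy
    simpa using this
  apply le_antisymm ?_ ?_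
  · -- B r ≤ closedSpan S
    intro b hb
    -- step 1 : multiplication by b maps B 1 into closedSpan S
    have hstep : ∀ c ∈ B 1, c * b ∈ closedSpan S := by
      intro c hc
      have hρ : Continuous (fun x : L => x * b) := continuous_mul_right b
      have hmapsto : Set.MapsTo (fun x : L => x * b)
          (Submodule.span ℂ T : Set L) (Submodule.span ℂ S : Set L) := by
        intro x hx
        have : Submodule.map (LinearMap.mulRight ℂ b) (Submodule.span ℂ T)
            ≤ Submodule.span ℂ S := by
          rw [Submodule.map_span, Submodule.span_le]
          rintro - ⟨z, ⟨t, x', hx', y, hy, rfl⟩, rfl⟩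
          refine Submodule.subset_span ?_
          refine ⟨t, x', hx', y * b, hXact t r y hy b hb, ?_⟩
          simp [LinearMap.mulRight_apply, mul_assoc]
        exact this ⟨x, hx, rfl⟩
      have hc' : c ∈ closure (Submodule.span ℂ T : Set L) := by
        rw [← hfull] at hc
        exact hc
      suffices h : c * b ∈ closure (Submodule.span ℂ S : Set L) from h
      exact map_mem_closure (f := fun x : L => x * b) hρ hc' hmapsto
    -- step 2 : approximate b by c * b with c ∈ B 1
    have haB : b * star b ∈ B 1 := by
      have := hBmul r r⁻¹ b hb (star b) (hBstar r b hb)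
      simpa using this
    have hsa : IsSelfAdjoint (b * star b) := .mul_star_self b
    have hcfc_mem : ∀ f : ℝ → ℝ, cfcₙ f (b * star b) ∈ (B 1 : Set L) := by
      intro f
      refine cfcn_mem_of_closed (B 1 : Set L) (hBclosed 1) (Submodule.zero_mem _)
        (fun x hx y hy ↦ Submodule.add_mem _ hx hy) (fun t x hx ↦ ?_)
        (fun x hx y hy ↦ by simpa using hBmul 1 1 x hx y hy)
        (fun x hx ↦ by simpa using hBstar 1 x hx) _ haB hsa f
      have : (t : ℝ) • x = ((t : ℂ)) • x := (Complex.coe_smul t x).symm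
      rw [this]
      exact Submodule.smul_mem _ _ hx
    have hclosed : IsClosed ((closedSpan S : Submodule ℂ L) : Set L) :=
      (Submodule.span ℂ S).isClosed_topologicalClosure
    rw [← SetLike.mem_coe, ← hclosed.closure_eq]
    rw [Metric.mem_closure_iff]
    intro ε' hε'
    set c : L := cfcₙ (fun x : ℝ => x ^ 2 * (x ^ 2 + ε' ^ 4)⁻¹) (b * star b) with hc_def
    refine ⟨c * b, hstep c (hcfc_mem _), ?_⟩
    have happrox := approx_aux b (by positivity : (0:ℝ) < ε' ^ 4)
    have hsqrt : Real.sqrt (ε' ^ 4) = ε' ^ 2 := by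
      rw [show ε' ^ 4 = (ε' ^ 2) ^ 2 by ring, Real.sqrt_sq (by positivity)]
    rw [hsqrt] at happrox
    rw [dist_eq_norm]
    nlinarith [norm_nonneg (b - c * b), happrox, hε']
  · -- closedSpan S ≤ B r
    apply Submodule.topologicalClosure_minimal
    · rw [Submodule.span_le]
      exact hS_sub
    · exact hBclosed r
end

section
/- Let (B_t)_{t∈G} be a concrete Fell bundle over a group G in a C*-algebra L and let (X_t)_{t∈G} be a concrete right Hilbert (B_t)-bundle. If (X_t) is strongly full, i.e. X_t*⋅X_t = B_t*⋅B_t for every t ∈ G, then X_r*⋅X_s = B_r*⋅B_s for all r, s ∈ G. -/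
/-- `S⋅T`: the closed linear span of all products `s * t` with `s ∈ S`, `t ∈ T`. -/
noncomputable def mulSpan {L : Type*} [NormedRing L] [NormedAlgebra ℂ L]
    (S T : Set L) : Submodule ℂ L :=
  closedSpan (Set.image2 (· * ·) S T)

open Filter Topology

section Lemmas

variable {L : Type*} [NormedRing L] [NormedAlgebra ℂ L]

lemma subset_closedSpan (S : Set L) : S ⊆ (closedSpan S : Set L) :=
  Submodule.subset_span.trans (Submodule.le_topologicalClosure _)

lemma isClosed_closedSpan (S : Set L) : IsClosed (closedSpan S : Set L) :=
  Submodule.isClosed_topologicalClosure _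

lemma closedSpan_le {S : Set L} {W : Submodule ℂ L} (hW : IsClosed (W : Set L))
    (h : S ⊆ (W : Set L)) : closedSpan S ≤ W :=
  Submodule.topologicalClosure_minimal _ (Submodule.span_le.mpr h) hW

lemma closedSpan_mono {S T : Set L} (h : S ⊆ T) : closedSpan S ≤ closedSpan T :=
  closedSpan_le (isClosed_closedSpan T) (h.trans (subset_closedSpan T))

lemma mul_mem_mulSpan {S T : Set L} {s t : L} (hs : s ∈ S) (ht : t ∈ T) :
    s * t ∈ mulSpan S T :=
  subset_closedSpan _ (Set.mem_image2_of_mem hs ht)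

lemma mulSpan_mono {S S' T T' : Set L} (hS : S ⊆ S') (hT : T ⊆ T') :
    mulSpan S T ≤ mulSpan S' T' :=
  closedSpan_mono (Set.image2_subset hS hT)

lemma isClosed_mulSpan (S T : Set L) : IsClosed (mulSpan S T : Set L) :=
  isClosed_closedSpan _

lemma mul_right_mem_of_mem_closedSpan {S : Set L} {W : Submodule ℂ L}
    (hW : IsClosed (W : Set L)) (v : L) (h : ∀ s ∈ S, s * v ∈ W) :
    ∀ u ∈ closedSpan S, u * v ∈ W := by
  intro u hu
  have hcl : IsClosed ((W.comap (LinearMap.mulRight ℂ v)) : Set L) := by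
    have : ((W.comap (LinearMap.mulRight ℂ v)) : Set L)
        = (fun u : L => u * v) ⁻¹' (W : Set L) := rfl
    rw [this]
    exact hW.preimage (continuous_id.mul continuous_const)
  exact closedSpan_le hcl (fun s hs => h s hs) hu

lemma mul_left_mem_of_mem_closedSpan {T : Set L} {W : Submodule ℂ L}
    (hW : IsClosed (W : Set L)) (u : L) (h : ∀ t ∈ T, u * t ∈ W) :
    ∀ v ∈ closedSpan T, u * v ∈ W := by
  intro v hv
  have hcl : IsClosed ((W.comap (LinearMap.mulLeft ℂ u)) : Set L) := by
    have : ((W.comap (LinearMap.mulLeft ℂ u)) : Set L)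
        = (fun v : L => u * v) ⁻¹' (W : Set L) := rfl
    rw [this]
    exact hW.preimage (continuous_const.mul continuous_id)
  exact closedSpan_le hcl (fun t ht => h t ht) hv

lemma mulSpan_le {S T : Set L} {W : Submodule ℂ L} (hW : IsClosed (W : Set L))
    (h : ∀ s ∈ S, ∀ t ∈ T, s * t ∈ W) : mulSpan S T ≤ W :=
  closedSpan_le hW (by rintro _ ⟨s, hs, t, ht, rfl⟩; exact h s hs t ht)

lemma mulSpan_closedSpan_left (S T : Set L) :
    mulSpan (closedSpan S : Set L) T = mulSpan S T := by
  refine le_antisymm ?_ (mulSpan_mono (subset_closedSpan S) subset_rfl)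
  refine mulSpan_le (isClosed_mulSpan S T) ?_
  intro s hs t ht
  exact mul_right_mem_of_mem_closedSpan (isClosed_mulSpan S T) t
    (fun s' hs' => mul_mem_mulSpan hs' ht) s hs

lemma mulSpan_closedSpan_right (S T : Set L) :
    mulSpan S (closedSpan T : Set L) = mulSpan S T := by
  refine le_antisymm ?_ (mulSpan_mono subset_rfl (subset_closedSpan T))
  refine mulSpan_le (isClosed_mulSpan S T) ?_
  intro s hs t ht
  exact mul_left_mem_of_mem_closedSpan (isClosed_mulSpan S T) s
    (fun t' ht' => mul_mem_mulSpan hs ht') t ht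

lemma mulSpan_assoc (S T U : Set L) :
    mulSpan (mulSpan S T : Set L) U = mulSpan S (mulSpan T U : Set L) := by
  have h1 : mulSpan (mulSpan S T : Set L) U = mulSpan (Set.image2 (· * ·) S T) U :=
    mulSpan_closedSpan_left _ _
  have h2 : mulSpan S (mulSpan T U : Set L) = mulSpan S (Set.image2 (· * ·) T U) :=
    mulSpan_closedSpan_right _ _
  rw [h1, h2]
  show closedSpan _ = closedSpan _
  rw [Set.image2_assoc mul_assoc]

end Lemmas

section StarLemmas

variable {L : Type*} [NormedRing L] [StarRing L] [CStarRing L]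
    [NormedAlgebra ℂ L] [StarModule ℂ L]

/-- The image of a submodule under `star`, as a submodule. -/
def starSub (P : Submodule ℂ L) : Submodule ℂ L where
  carrier := star '' (P : Set L)
  add_mem' := by
    rintro a b ⟨x, hx, rfl⟩ ⟨y, hy, rfl⟩
    exact ⟨x + y, P.add_mem hx hy, star_add x y⟩
  zero_mem' := ⟨0, P.zero_mem, star_zero L⟩
  smul_mem' := by
    rintro c a ⟨x, hx, rfl⟩
    refine ⟨(starRingEnd ℂ) c • x, P.smul_mem _ hx, ?_⟩
    rw [star_smul]
    simp

lemma coe_starSub (P : Submodule ℂ L) : (starSub P : Set L) = star '' (P : Set L) := rfl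

lemma isClosed_starSub {P : Submodule ℂ L} (hP : IsClosed (P : Set L)) :
    IsClosed (starSub P : Set L) := by
  have : (starSub P : Set L) = star ⁻¹' (P : Set L) := by
    ext x
    constructor
    · rintro ⟨y, hy, rfl⟩; simpa using hy
    · intro hx; exact ⟨star x, hx, star_star x⟩
  rw [this]
  exact hP.preimage continuous_star

lemma star_image_star_image (S : Set L) : star '' (star '' S) = S := by
  ext x
  constructor
  · rintro ⟨_, ⟨y, hy, rfl⟩, rfl⟩; simpa using hy
  · intro hx; exact ⟨star x, ⟨x, hx, rfl⟩, star_star x⟩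

lemma star_image_span_subset (S : Set L) :
    star '' ((Submodule.span ℂ S : Submodule ℂ L) : Set L)
      ⊆ ((Submodule.span ℂ (star '' S) : Submodule ℂ L) : Set L) := by
  rintro _ ⟨x, hx, rfl⟩
  induction hx using Submodule.span_induction with
  | mem y hy => exact Submodule.subset_span ⟨y, hy, rfl⟩
  | zero => simpa using (Submodule.span ℂ (star '' S)).zero_mem
  | add y z _ _ hy' hz' =>
      rw [star_add]; exact (Submodule.span ℂ (star '' S)).add_mem hy' hz'
  | smul c y _ hy' =>
      rw [star_smul]; exact (Submodule.span ℂ (star '' S)).smul_mem _ hy'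

lemma starSub_closedSpan (S : Set L) :
    starSub (closedSpan S) = closedSpan (star '' S) := by
  apply le_antisymm
  · rintro _ ⟨x, hx, rfl⟩
    have h1 : star x ∈ closure (star '' ((Submodule.span ℂ S : Submodule ℂ L) : Set L)) := by
      refine image_closure_subset_closure_image continuous_star ⟨x, ?_, rfl⟩
      exact hx
    have h2 : closure (star '' ((Submodule.span ℂ S : Submodule ℂ L) : Set L))
        ⊆ closure ((Submodule.span ℂ (star '' S) : Submodule ℂ L) : Set L) :=
      closure_mono (star_image_span_subset S)
    exact h2 h1
  · refine closedSpan_le (isClosed_starSub (isClosed_closedSpan S)) ?_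
    rintro _ ⟨s, hs, rfl⟩
    exact ⟨s, subset_closedSpan S hs, rfl⟩

lemma star_image_image2 (S T : Set L) :
    star '' Set.image2 (· * ·) S T = Set.image2 (· * ·) (star '' T) (star '' S) := by
  ext x
  constructor
  · rintro ⟨_, ⟨s, hs, t, ht, rfl⟩, rfl⟩
    exact ⟨star t, ⟨t, ht, rfl⟩, star s, ⟨s, hs, rfl⟩, (star_mul s t).symm⟩
  · rintro ⟨_, ⟨t, ht, rfl⟩, _, ⟨s, hs, rfl⟩, rfl⟩
    exact ⟨s * t, ⟨s, hs, t, ht, rfl⟩, star_mul s t⟩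

lemma starSub_mulSpan (S T : Set L) :
    starSub (mulSpan S T) = mulSpan (star '' T) (star '' S) := by
  show starSub (closedSpan _) = closedSpan _
  rw [starSub_closedSpan, star_image_image2]

end StarLemmas

section RealAux

lemma aux_real (n : ℕ) {u : ℝ} (h0 : 0 ≤ u) (h1 : u ≤ 1) :
    u * (1 - u) ^ n ≤ 1 / (n + 1) := by
  have hv0 : (0:ℝ) ≤ 1 - u := by linarith
  have hb : 1 + n * u ≤ (1 + u) ^ n := by
    have := one_add_mul_le_pow (a := u) (by linarith) n
    linarith
  have h2 : (1 + n * u) * (1 - u) ^ n ≤ 1 := by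
    calc (1 + n * u) * (1 - u) ^ n
        ≤ (1 + u) ^ n * (1 - u) ^ n :=
          mul_le_mul_of_nonneg_right hb (pow_nonneg hv0 n)
      _ = ((1 + u) * (1 - u)) ^ n := (mul_pow _ _ n).symm
      _ = (1 - u * u) ^ n := by ring_nf
      _ ≤ 1 := pow_le_one₀ (by nlinarith) (by nlinarith)
  have h3 : ((n : ℝ) + 1) * (u * (1 - u) ^ n) ≤ 1 := by
    have e : ((n : ℝ) + 1) * (u * (1 - u) ^ n) = (((n : ℝ) + 1) * u) * (1 - u) ^ n := by ring
    rw [e]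
    refine le_trans (mul_le_mul_of_nonneg_right ?_ (pow_nonneg hv0 n)) h2
    have : ((n : ℝ) + 1) * u = (n : ℝ) * u + u := by ring
    rw [this]; linarith
  have hn : (0:ℝ) < (n : ℝ) + 1 := by positivity
  rw [le_div_iff₀ hn]
  nlinarith [h3]

end RealAux

section FactA

variable {L : Type*} [NormedRing L] [StarRing L] [CStarRing L]
    [NormedAlgebra ℂ L] [StarModule ℂ L] [CompleteSpace L]

lemma factA {Y : Submodule ℂ L} (hY : IsClosed (Y : Set L))
    (h : ∀ x ∈ Y, ∀ y ∈ Y, ∀ z ∈ Y, x * (star y * z) ∈ Y) :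
    Y = mulSpan (Y : Set L) (mulSpan (star '' (Y : Set L)) (Y : Set L) : Set L) := by
  set C : Submodule ℂ L := mulSpan (star '' (Y : Set L)) (Y : Set L) with hCdef
  have hCclosed : IsClosed (C : Set L) := isClosed_mulSpan _ _
  have hCmul : ∀ c ∈ C, ∀ c' ∈ C, c * c' ∈ C := by
    have hgen : ∀ g ∈ Set.image2 (· * ·) (star '' (Y : Set L)) (Y : Set L),
        ∀ g' ∈ Set.image2 (· * ·) (star '' (Y : Set L)) (Y : Set L), g * g' ∈ C := by
      rintro _ ⟨_, ⟨u, hu, rfl⟩, v, hv, rfl⟩ _ ⟨_, ⟨u', hu', rfl⟩, v', hv', rfl⟩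
      have e : star u * v * (star u' * v') = star u * (v * (star u' * v')) := by
        rw [mul_assoc]
      rw [e]
      exact mul_mem_mulSpan ⟨u, hu, rfl⟩ (h v hv u' hu' v' hv')
    intro c hc c' hc'
    have step1 : ∀ g ∈ Set.image2 (· * ·) (star '' (Y : Set L)) (Y : Set L), g * c' ∈ C :=
      fun g hg => mul_left_mem_of_mem_closedSpan hCclosed g (hgen g hg) c' hc'
    exact mul_right_mem_of_mem_closedSpan hCclosed c' step1 c hc
  apply le_antisymm
  · -- hard direction
    intro y hy
    rcases subsingleton_or_nontrivial L with hL | hL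
    · have : y = (0 : L) := Subsingleton.elim _ _
      rw [this]; exact Submodule.zero_mem _
    letI : CStarAlgebra L := {}
    set a : L := star y * y with ha_def
    have ha : IsSelfAdjoint a := IsSelfAdjoint.star_mul_self y
    have haC : a ∈ C := mul_mem_mulSpan ⟨y, hy, rfl⟩ hy
    by_cases ha0 : a = 0
    · have hnorm : ‖y‖ * ‖y‖ = 0 := by
        rw [← CStarRing.norm_star_mul_self, ← ha_def, ha0, norm_zero]
      have hy0 : y = 0 := norm_eq_zero.mp (mul_self_eq_zero.mp hnorm)
      rw [hy0]; exact Submodule.zero_mem _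
    set M : ℝ := ‖a‖ with hM
    have hM0 : (0:ℝ) < M := norm_pos_iff.mpr ha0
    set b : L := ((M⁻¹ : ℝ) : ℂ) • a with hb
    have hbC : b ∈ C := C.smul_mem _ haC
    have hbstar : star b = b := by
      rw [hb, star_smul, ha.star_eq]
      congr 1
      simp [Complex.conj_ofReal]
    set d : L := 1 - b with hd
    have hdstar : star d = d := by rw [hd, star_sub, star_one, hbstar]
    set c : ℕ → L := fun n => 1 - (1 - b) ^ n with hc_def
    have hcC : ∀ n, c n ∈ C := by
      intro n
      induction n with
      | zero => simpa [hc_def] using C.zero_mem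
      | succ n ih =>
        have e : c (n + 1) = c n + (b - c n * b) := by
          simp only [hc_def, pow_succ]
          noncomm_ring
        rw [e]
        exact C.add_mem ih (C.sub_mem hbC (hCmul _ ih _ hbC))
    have hmem : ∀ n, y * c n ∈ mulSpan (Y : Set L) (C : Set L) :=
      fun n => mul_mem_mulSpan hy (hcC n)
    -- commutation
    have hcomm : Commute a d := by
      have h1 : Commute a b := by
        rw [hb]; exact (Commute.refl a).smul_right _
      rw [hd]
      exact (Commute.one_right a).sub_right h1
    have hdn : ∀ m : ℕ, d ^ m * a * d ^ m = a * d ^ (2 * m) := by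
      intro m
      have e1 : d ^ m * a = a * d ^ m := (hcomm.symm.pow_left m).eq
      rw [e1, mul_assoc, ← pow_add, two_mul]
    -- spectrum bounds
    have hspec : ∀ x ∈ spectrum ℝ a, 0 ≤ x ∧ x ≤ M := by
      intro x hx
      refine ⟨spectrum_star_mul_self_nonneg x hx, ?_⟩
      have := spectrum.norm_le_norm_of_mem hx
      rw [Real.norm_eq_abs] at this
      exact (abs_le.mp this).2
    -- cfc computation
    have hcfc : ∀ m : ℕ, cfc (fun x : ℝ => x * (1 - M⁻¹ * x) ^ m) a = a * d ^ m := by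
      intro m
      have h1 : cfc (fun x : ℝ => 1 - M⁻¹ * x) a = d := by
        rw [cfc_sub (fun _ => (1:ℝ)) (fun x : ℝ => M⁻¹ * x) a, cfc_const_one ℝ a,
          cfc_const_mul_id M⁻¹ a]
        have hsm : M⁻¹ • a = ((M⁻¹ : ℝ) : ℂ) • a := rfl
        rw [hd, hb, hsm]
      have h2 : cfc (fun x : ℝ => (1 - M⁻¹ * x) ^ m) a = d ^ m := by
        rw [← h1, ← cfc_pow (fun x : ℝ => 1 - M⁻¹ * x) m a]
      calc cfc (fun x : ℝ => x * (1 - M⁻¹ * x) ^ m) a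
          = cfc (fun x : ℝ => x) a * cfc (fun x : ℝ => (1 - M⁻¹ * x) ^ m) a :=
            cfc_mul _ _ a
        _ = a * d ^ m := by rw [h2, cfc_id' ℝ a]
    -- norm bound
    have hbound : ∀ n : ℕ, ‖a * d ^ (2 * n)‖ ≤ M * (1 / (n + 1)) := by
      intro n
      rw [← hcfc (2 * n)]
      apply norm_cfc_le (by positivity)
      intro x hx
      obtain ⟨hx0, hxM⟩ := hspec x hx
      have hu0 : (0:ℝ) ≤ M⁻¹ * x := by positivity
      have hu1 : M⁻¹ * x ≤ 1 := by
        rw [inv_mul_eq_div, div_le_one hM0]; exact hxM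
      have hv0 : (0:ℝ) ≤ 1 - M⁻¹ * x := by linarith
      have hpos : (0:ℝ) ≤ x * (1 - M⁻¹ * x) ^ (2 * n) :=
        mul_nonneg hx0 (pow_nonneg hv0 _)
      rw [Real.norm_eq_abs, abs_of_nonneg hpos]
      have h2n : x * (1 - M⁻¹ * x) ^ (2 * n) ≤ x * (1 - M⁻¹ * x) ^ n := by
        apply mul_le_mul_of_nonneg_left
          (pow_le_pow_of_le_one hv0 (by linarith) (by omega)) hx0
      have hxMu : x * (1 - M⁻¹ * x) ^ n = M * ((M⁻¹ * x) * (1 - M⁻¹ * x) ^ n) := by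
        field_simp
      calc x * (1 - M⁻¹ * x) ^ (2 * n) ≤ x * (1 - M⁻¹ * x) ^ n := h2n
        _ = M * ((M⁻¹ * x) * (1 - M⁻¹ * x) ^ n) := hxMu
        _ ≤ M * (1 / (n + 1)) :=
            mul_le_mul_of_nonneg_left (aux_real n hu0 hu1) hM0.le
    -- difference estimate
    have hdiff : ∀ n : ℕ, ‖y - y * c n‖ ^ 2 ≤ M * (1 / (n + 1)) := by
      intro n
      have e1 : y - y * c n = y * d ^ n := by
        simp only [hc_def, hd]
        noncomm_ring
      have e3 : star (y * d ^ n) * (y * d ^ n) = a * d ^ (2 * n) := by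
        rw [star_mul, star_pow, hdstar, ← hdn n]
        rw [ha_def]
        noncomm_ring
      have e2 : ‖y * d ^ n‖ ^ 2 = ‖star (y * d ^ n) * (y * d ^ n)‖ := by
        rw [CStarRing.norm_star_mul_self]; ring
      rw [e1, e2, e3]
      exact hbound n
    -- convergence
    have hq : Tendsto (fun n : ℕ => M * (1 / (n + 1 : ℝ))) atTop (𝓝 0) := by
      have := tendsto_one_div_add_atTop_nhds_zero_nat (𝕜 := ℝ)
      simpa using this.const_mul M
    have hnorm0 : Tendsto (fun n : ℕ => ‖y - y * c n‖) atTop (𝓝 0) := by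
      have hle : ∀ n : ℕ, ‖y - y * c n‖ ≤ Real.sqrt (M * (1 / (n + 1))) := by
        intro n
        rw [Real.le_sqrt (norm_nonneg _)]
        · exact hdiff n
        · positivity
      have hsq : Tendsto (fun n : ℕ => Real.sqrt (M * (1 / (n + 1)))) atTop (𝓝 0) := by
        have := (Real.continuous_sqrt.tendsto 0).comp hq
        simpa [Function.comp_def] using this
      exact squeeze_zero (fun n => norm_nonneg _) hle hsq
    have hlim : Tendsto (fun n : ℕ => y * c n) atTop (𝓝 y) := by
      rw [tendsto_iff_norm_sub_tendsto_zero]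
      simpa [norm_sub_rev] using hnorm0
    exact (isClosed_mulSpan (Y : Set L) (C : Set L)).mem_of_tendsto hlim
      (Filter.Eventually.of_forall hmem)
  · refine mulSpan_le hY ?_
    intro x hx c hc
    refine mul_left_mem_of_mem_closedSpan hY x ?_ c hc
    rintro _ ⟨_, ⟨u, hu, rfl⟩, v, hv, rfl⟩
    exact h x hx u hu v hv

end FactA

/-- If `(X t)` is a strongly full concrete right Hilbert `(B t)`-bundle
(`X t* ⋅ X t = B t* ⋅ B t` for all `t`), then `X r* ⋅ X s = B r* ⋅ B s` for all `r, s`. -/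
theorem starMulSpan_eq_of_stronglyFull
    {G L : Type*} [Group G] [NormedRing L] [StarRing L] [CStarRing L]
    [NormedAlgebra ℂ L] [StarModule ℂ L] [CompleteSpace L]
    (B : G → Submodule ℂ L)
    (hBclosed : ∀ t : G, IsClosed (B t : Set L))
    (hBmul : ∀ r s : G, ∀ b ∈ B r, ∀ c ∈ B s, b * c ∈ B (r * s))
    (hBstar : ∀ t : G, ∀ b ∈ B t, star b ∈ B t⁻¹)
    (X : G → Submodule ℂ L)
    (hXclosed : ∀ t : G, IsClosed (X t : Set L))
    (hXact : ∀ r s : G, ∀ x ∈ X r, ∀ b ∈ B s, x * b ∈ X (r * s))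
    (hXinner : ∀ r s : G, ∀ x ∈ X r, ∀ y ∈ X s, star x * y ∈ B (r⁻¹ * s))
    (hsfull : ∀ t : G,
      mulSpan (star '' (X t : Set L)) (X t : Set L)
        = mulSpan (star '' (B t : Set L)) (B t : Set L)) :
    ∀ r s : G,
      mulSpan (star '' (X r : Set L)) (X s : Set L)
        = mulSpan (star '' (B r : Set L)) (B s : Set L) := by
  intro r s
  -- Fact A for X r
  have hXr : X r = mulSpan ((X r : Set L))
      (mulSpan (star '' (X r : Set L)) (X r : Set L) : Set L) := by
    refine factA (hXclosed r) ?_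
    intro x hx u hu v hv
    have h1 : star u * v ∈ B (r⁻¹ * r) := hXinner r r u hu v hv
    have h2 : x * (star u * v) ∈ X (r * (r⁻¹ * r)) := hXact r (r⁻¹ * r) x hx _ h1
    simpa using h2
  -- Fact A for B s
  have hBs : B s = mulSpan ((B s : Set L))
      (mulSpan (star '' (B s : Set L)) (B s : Set L) : Set L) := by
    refine factA (hBclosed s) ?_
    intro x hx u hu v hv
    have h0 : star u ∈ B s⁻¹ := hBstar s u hu
    have h1 : star u * v ∈ B (s⁻¹ * s) := hBmul s⁻¹ s _ h0 v hv
    have h2 : x * (star u * v) ∈ B (s * (s⁻¹ * s)) := hBmul s (s⁻¹ * s) x hx _ h1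
    simpa using h2
  -- star version of hXr : star '' X r = mulSpan (X r* X r) (star '' X r)
  have hXrstar : starSub (X r) = mulSpan
      ((mulSpan (star '' (X r : Set L)) (X r : Set L) : Submodule ℂ L) : Set L)
      (star '' (X r : Set L)) := by
    conv_lhs => rw [hXr]
    rw [starSub_mulSpan]
    congr 1
    · show (starSub (mulSpan (star '' (X r : Set L)) (X r : Set L)) : Set L) = _
      rw [starSub_mulSpan, star_image_star_image]
  apply le_antisymm
  · -- X r* ⋅ X s ≤ B r* ⋅ B s
    have hinner : mulSpan ((B r : Set L))
        ((mulSpan (star '' (X r : Set L)) (X s : Set L) : Submodule ℂ L) : Set L) ≤ B s := by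
      refine mulSpan_le (hBclosed s) ?_
      intro bb hbb w hw
      refine mul_left_mem_of_mem_closedSpan (hBclosed s) bb ?_ w hw
      rintro _ ⟨_, ⟨x, hx, rfl⟩, z, hz, rfl⟩
      have h1 : star x * z ∈ B (r⁻¹ * s) := hXinner r s x hx z hz
      have h2 : bb * (star x * z) ∈ B (r * (r⁻¹ * s)) := hBmul r (r⁻¹ * s) bb hbb _ h1
      simpa using h2
    calc mulSpan (star '' (X r : Set L)) (X s : Set L)
        = mulSpan ((starSub (X r) : Submodule ℂ L) : Set L) (X s : Set L) := rfl
      _ = mulSpan ((mulSpan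
              ((mulSpan (star '' (X r : Set L)) (X r : Set L) : Submodule ℂ L) : Set L)
              (star '' (X r : Set L)) : Submodule ℂ L) : Set L) (X s : Set L) := by
            rw [hXrstar]
      _ = mulSpan ((mulSpan (star '' (X r : Set L)) (X r : Set L) : Submodule ℂ L) : Set L)
            ((mulSpan (star '' (X r : Set L)) (X s : Set L) : Submodule ℂ L) : Set L) :=
          mulSpan_assoc _ _ _
      _ = mulSpan ((mulSpan (star '' (B r : Set L)) (B r : Set L) : Submodule ℂ L) : Set L)
            ((mulSpan (star '' (X r : Set L)) (X s : Set L) : Submodule ℂ L) : Set L) := by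
            rw [hsfull r]
      _ = mulSpan (star '' (B r : Set L))
            ((mulSpan ((B r : Set L))
              ((mulSpan (star '' (X r : Set L)) (X s : Set L) : Submodule ℂ L) : Set L)
                : Submodule ℂ L) : Set L) :=
          mulSpan_assoc _ _ _
      _ ≤ mulSpan (star '' (B r : Set L)) (B s : Set L) :=
          mulSpan_mono subset_rfl (SetLike.coe_subset_coe.mpr hinner)
  · -- B r* ⋅ B s ≤ X r* ⋅ X s
    have hinner : mulSpan
        ((mulSpan (star '' (B r : Set L)) (B s : Set L) : Submodule ℂ L) : Set L)
        (star '' (X s : Set L)) ≤ starSub (X r) := by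
      refine mulSpan_le (isClosed_starSub (hXclosed r)) ?_
      intro u hu v hv
      obtain ⟨x, hx, rfl⟩ := hv
      refine mul_right_mem_of_mem_closedSpan (isClosed_starSub (hXclosed r)) (star x) ?_ u hu
      rintro _ ⟨_, ⟨bb, hbb, rfl⟩, cc, hcc, rfl⟩
      have h1 : x * star cc ∈ X (s * s⁻¹) := hXact s s⁻¹ x hx _ (hBstar s cc hcc)
      have h2 : (x * star cc) * bb ∈ X ((s * s⁻¹) * r) := hXact (s * s⁻¹) r _ h1 bb hbb
      have h3 : (x * star cc) * bb ∈ X r := by simpa using h2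
      refine ⟨x * star cc * bb, h3, ?_⟩
      simp [star_mul, mul_assoc]
    calc mulSpan (star '' (B r : Set L)) (B s : Set L)
        = mulSpan (star '' (B r : Set L))
            ((mulSpan ((B s : Set L))
              ((mulSpan (star '' (B s : Set L)) (B s : Set L) : Submodule ℂ L) : Set L)
                : Submodule ℂ L) : Set L) := by
            conv_lhs => rw [hBs]
      _ = mulSpan (star '' (B r : Set L))
            ((mulSpan ((B s : Set L))
              ((mulSpan (star '' (X s : Set L)) (X s : Set L) : Submodule ℂ L) : Set L)
                : Submodule ℂ L) : Set L) := by
            rw [← hsfull s]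
      _ = mulSpan ((mulSpan (star '' (B r : Set L)) (B s : Set L) : Submodule ℂ L) : Set L)
            ((mulSpan (star '' (X s : Set L)) (X s : Set L) : Submodule ℂ L) : Set L) :=
          (mulSpan_assoc _ _ _).symm
      _ = mulSpan ((mulSpan
              ((mulSpan (star '' (B r : Set L)) (B s : Set L) : Submodule ℂ L) : Set L)
              (star '' (X s : Set L)) : Submodule ℂ L) : Set L) (X s : Set L) :=
          (mulSpan_assoc _ _ _).symm
      _ ≤ mulSpan ((starSub (X r) : Submodule ℂ L) : Set L) (X s : Set L) :=
          mulSpan_mono (SetLike.coe_subset_coe.mpr hinner) subset_rfl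
      _ = mulSpan (star '' (X r : Set L)) (X s : Set L) := rfl
end

section
/- Let (B_t)_{t∈G} be a concrete Fell bundle over a group G in a C*-algebra L. Then for all r, s ∈ G the closed linear span of {b*·c·d : b, c ∈ B_s, d ∈ B_r} is contained in the closed linear span of {d·e*·f : d ∈ B_r, e, f ∈ B_{sr}}; in the span notation, (B_s*⋅B_s)⋅B_r ⊆ B_r⋅(B_{sr}*⋅B_{sr}). -/
private lemma fell_aux_poly_bound {M t : ℝ} (hM : 0 < M) (ht0 : 0 ≤ t) (htM : t ≤ M) (n : ℕ) :
    t * (1 - M⁻¹ * t) ^ (2 * n) ≤ M / (2 * (n : ℝ) + 1) := by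
  set s : ℝ := M⁻¹ * t with hs
  have hs0 : 0 ≤ s := by positivity
  have hs1 : s ≤ 1 := by
    rw [hs, ← div_eq_inv_mul]
    exact div_le_one_of_le₀ htM hM.le
  have ht : t = M * s := by
    rw [hs, ← mul_assoc, mul_inv_cancel₀ hM.ne', one_mul]
  have h2 : 1 + ((2 * n : ℕ) : ℝ) * s ≤ (1 + s) ^ (2 * n) :=
    one_add_mul_le_pow (by linarith) (2 * n)
  have h3 : (0 : ℝ) ≤ (1 - s) ^ (2 * n) := pow_nonneg (by linarith) _
  have h1 : (1 - s) ^ (2 * n) * (1 + s) ^ (2 * n) ≤ 1 := by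
    rw [← mul_pow]
    exact pow_le_one₀ (by nlinarith) (by nlinarith)
  have h4 : (1 - s) ^ (2 * n) * (1 + ((2 * n : ℕ) : ℝ) * s) ≤ 1 :=
    le_trans (mul_le_mul_of_nonneg_left h2 h3) h1
  push_cast at h4
  rw [ht, le_div_iff₀ (by positivity)]
  nlinarith [mul_nonneg (mul_nonneg hM.le h3) (by linarith : (0:ℝ) ≤ 1 - s),
    mul_le_mul_of_nonneg_left h4 hM.le]

/-- For a concrete Fell bundle `(B t)`, one has
`(B s* ⋅ B s) ⋅ B r ⊆ B r ⋅ (B (s*r)* ⋅ B (s*r))`: the closed linear span of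
`{b* ⬝ c ⬝ d : b, c ∈ B s, d ∈ B r}` is contained in the closed linear span of
`{d ⬝ (e* ⬝ f) : d ∈ B r, e, f ∈ B (s*r)}`. -/
theorem fellBundle_starMul_mul_subset
    {G L : Type*} [Group G] [NormedRing L] [StarRing L] [CStarRing L]
    [NormedAlgebra ℂ L] [StarModule ℂ L] [CompleteSpace L]
    (B : G → Submodule ℂ L)
    (hclosed : ∀ t : G, IsClosed (B t : Set L))
    (hmul : ∀ r s : G, ∀ b ∈ B r, ∀ c ∈ B s, b * c ∈ B (r * s))
    (hstar : ∀ t : G, ∀ b ∈ B t, star b ∈ B t⁻¹) :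
    ∀ r s : G,
      closedSpan {x : L | ∃ b ∈ B s, ∃ c ∈ B s, ∃ d ∈ B r, x = star b * c * d}
        ≤ closedSpan {x : L | ∃ d ∈ B r, ∃ e ∈ B (s * r), ∃ f ∈ B (s * r),
            x = d * (star e * f)} := by
  letI : CStarAlgebra L := { }
  intro r s
  set T : Set L := {x : L | ∃ d ∈ B r, ∃ e ∈ B (s * r), ∃ f ∈ B (s * r),
      x = d * (star e * f)} with hT
  refine Submodule.topologicalClosure_minimal _ (Submodule.span_le.mpr ?_)
    (Submodule.isClosed_topologicalClosure _)
  rintro x ⟨b, hb, c, hc, d, hd, rfl⟩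
  -- setup
  set z : L := c * d with hzdef
  have hz : z ∈ B (s * r) := hmul s r c hc d hd
  have hxeq : star b * c * d = star b * z := mul_assoc _ _ _
  have hxr : star b * z ∈ B r := by
    have := hmul s⁻¹ (s * r) (star b) (hstar s b hb) z hz
    rwa [inv_mul_cancel_left] at this
  set y : L := star z * z with hydef
  have hy1 : y ∈ B 1 := by
    have := hmul (s * r)⁻¹ (s * r) (star z) (hstar _ z hz) z hz
    rwa [inv_mul_cancel] at this
  have hysa : IsSelfAdjoint y := IsSelfAdjoint.star_mul_self z
  set M : ℝ := ‖y‖ * ‖(1 : L)‖ + 1 with hMdef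
  have hM : (0 : ℝ) < M := by positivity
  set a : L := M⁻¹ • y with hadef
  have hasa : IsSelfAdjoint a := by
    rw [hadef, ← Complex.coe_smul]
    have hstareq : star ((M⁻¹ : ℝ) : ℂ) = ((M⁻¹ : ℝ) : ℂ) := by
      rw [Complex.star_def]; exact Complex.conj_ofReal _
    exact IsSelfAdjoint.smul hstareq hysa
  have hsapow : ∀ n : ℕ, IsSelfAdjoint ((1 - a) ^ n) :=
    fun n => ((IsSelfAdjoint.one (R := L)).sub hasa).pow n
  have hcya : Commute y a := by
    rw [hadef]; exact (Commute.refl y).smul_right _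
  have hcyn : ∀ n : ℕ, Commute y ((1 - a) ^ n) :=
    fun n => ((Commute.one_right y).sub_right hcya).pow_right n
  have hsmulmem : ∀ (t : G) (v : L), v ∈ B t → M⁻¹ • v ∈ B t := by
    intro t v hv
    rw [← Complex.coe_smul]
    exact (B t).smul_mem _ hv
  -- the elements z * (1-a)^n stay in B (s*r)
  have hw : ∀ n : ℕ, z * (1 - a) ^ n ∈ B (s * r) := by
    intro n
    induction n with
    | zero => simpa using hz
    | succ n ih =>
      have heq : z * (1 - a) ^ (n + 1)
          = z * (1 - a) ^ n - M⁻¹ • (z * (1 - a) ^ n * y) := by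
        rw [pow_succ, ← mul_assoc, mul_sub, mul_one, hadef, mul_smul_comm]
      rw [heq]
      refine sub_mem ih (hsmulmem _ _ ?_)
      have := hmul (s * r) 1 _ ih _ hy1
      rwa [mul_one] at this
  -- the approximations lie in the span of T
  have hxu : ∀ n : ℕ, (star b * z) * (1 - (1 - a) ^ n) ∈ Submodule.span ℂ T := by
    intro n
    induction n with
    | zero => simp
    | succ n ih =>
      have hca : Commute a ((1 - a) ^ n) :=
        ((Commute.one_right a).sub_right (Commute.refl a)).pow_right n
      have heq : (1 : L) - (1 - a) ^ (n + 1)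
          = (1 - (1 - a) ^ n) + a * (1 - a) ^ n := by
        rw [pow_succ, mul_sub, mul_one, ← hca.eq]
        abel
      rw [heq, mul_add]
      refine add_mem ih ?_
      have heq2 : (star b * z) * (a * (1 - a) ^ n)
          = M⁻¹ • ((star b * z) * (star z * (z * (1 - a) ^ n))) := by
        rw [hadef, smul_mul_assoc, mul_smul_comm, hydef]
        simp only [mul_assoc]
      rw [heq2, ← Complex.coe_smul]
      refine Submodule.smul_mem _ _ (Submodule.subset_span ?_)
      exact ⟨star b * z, hxr, z, hz, z * (1 - a) ^ n, hw n, rfl⟩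
  -- norm bound
  have hbound : ∀ n : ℕ, ‖(star b * z) * (1 - (1 - a) ^ n) - star b * z‖
      ≤ ‖b‖ * Real.sqrt (M / (2 * (n : ℝ) + 1)) := by
    intro n
    have hstep1 : (star b * z) * (1 - (1 - a) ^ n) - star b * z
        = -(star b * (z * (1 - a) ^ n)) := by
      rw [mul_sub, mul_one, mul_assoc]
      abel
    rw [hstep1, norm_neg]
    have hsq : ‖z * (1 - a) ^ n‖ ^ 2 = ‖y * (1 - a) ^ (2 * n)‖ := by
      rw [sq, ← CStarRing.norm_star_mul_self]
      congr 1
      rw [star_mul, (hsapow n).star_eq]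
      calc (1 - a) ^ n * star z * (z * (1 - a) ^ n)
          = (1 - a) ^ n * (y * (1 - a) ^ n) := by
            rw [hydef]; simp only [mul_assoc]
        _ = (y * (1 - a) ^ n) * (1 - a) ^ n := by
            rw [← mul_assoc, ← (hcyn n).eq]
        _ = y * (1 - a) ^ (2 * n) := by
            rw [mul_assoc, ← pow_add, two_mul]
    have hcfc : y * (1 - a) ^ (2 * n)
        = cfc (fun t : ℝ => t * (1 - M⁻¹ * t) ^ (2 * n)) y := by
      have e1 : cfc (fun t : ℝ => t * (1 - M⁻¹ * t) ^ (2 * n)) y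
          = cfc (fun t : ℝ => t) y * cfc (fun t : ℝ => (1 - M⁻¹ * t) ^ (2 * n)) y :=
        cfc_mul (R := ℝ) (fun t : ℝ => t) (fun t : ℝ => (1 - M⁻¹ * t) ^ (2 * n)) y
      have e2 : cfc (fun t : ℝ => (1 - M⁻¹ * t) ^ (2 * n)) y
          = (cfc (fun t : ℝ => 1 - M⁻¹ * t) y) ^ (2 * n) := cfc_pow _ _ y
      have e3 : cfc (fun t : ℝ => 1 - M⁻¹ * t) y
          = cfc (fun _ : ℝ => (1 : ℝ)) y - cfc (fun t : ℝ => M⁻¹ * t) y :=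
        cfc_sub _ _ y
      have e4 : cfc (fun _ : ℝ => (1 : ℝ)) y = 1 := by
        rw [cfc_const 1 y, map_one]
      have e5 : cfc (fun t : ℝ => M⁻¹ * t) y = M⁻¹ • y := cfc_const_mul_id M⁻¹ y
      rw [e1, e2, e3, e4, e5, cfc_id' ℝ y, hadef]
    have hnormle : ‖y * (1 - a) ^ (2 * n)‖ ≤ M / (2 * (n : ℝ) + 1) := by
      rw [hcfc]
      refine norm_cfc_le (by positivity) ?_
      intro t ht
      have ht0 : 0 ≤ t := spectrum_star_mul_self_nonneg t (hydef ▸ ht)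
      have htM : t ≤ M := by
        have h := spectrum.norm_le_norm_mul_of_mem ht
        rw [Real.norm_eq_abs] at h
        rw [hMdef]
        linarith [le_abs_self t]
      have hev : (0 : ℝ) ≤ (1 - M⁻¹ * t) ^ (2 * n) :=
        (even_two_mul n).pow_nonneg _
      rw [Real.norm_eq_abs, abs_of_nonneg (mul_nonneg ht0 hev)]
      exact fell_aux_poly_bound hM ht0 htM n
    calc ‖star b * (z * (1 - a) ^ n)‖
        ≤ ‖star b‖ * ‖z * (1 - a) ^ n‖ := norm_mul_le _ _
      _ = ‖b‖ * ‖z * (1 - a) ^ n‖ := by rw [norm_star]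
      _ ≤ ‖b‖ * Real.sqrt (M / (2 * (n : ℝ) + 1)) := by
          refine mul_le_mul_of_nonneg_left ?_ (norm_nonneg b)
          rw [Real.le_sqrt (norm_nonneg _) (by positivity)]
          rw [hsq]
          exact hnormle
  -- convergence
  have htend : Filter.Tendsto (fun n : ℕ => (star b * z) * (1 - (1 - a) ^ n))
      Filter.atTop (nhds (star b * z)) := by
    rw [← tendsto_sub_nhds_zero_iff]
    refine squeeze_zero_norm hbound ?_
    have h1 : Filter.Tendsto (fun n : ℕ => M / (2 * (n : ℝ) + 1))
        Filter.atTop (nhds 0) := by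
      apply Filter.Tendsto.div_atTop tendsto_const_nhds
      apply Filter.tendsto_atTop_add_const_right
      exact Filter.Tendsto.const_mul_atTop two_pos tendsto_natCast_atTop_atTop
    have h2 := (Real.continuous_sqrt.tendsto 0).comp h1
    rw [Real.sqrt_zero] at h2
    simpa using h2.const_mul ‖b‖
  -- conclude
  show star b * c * d ∈ (Submodule.span ℂ T).topologicalClosure
  rw [hxeq]
  refine (Submodule.isClosed_topologicalClosure _).mem_of_tendsto htend
    (Filter.Eventually.of_forall fun n => ?_)
  exact Submodule.le_topologicalClosure _ (hxu n)
end

section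
/- Let G be a locally compact Hausdorff topological group with left Haar measure μ and modular function Δ, and let A be a complex C*-algebra. For continuous compactly supported functions T : G×G → A and f, g : G → A and u ∈ G define: β_u(T) : G×G → A by β_u(T)(r,s) := Δ(u)·T(ru, su); the action (T·f) : G → A by (T·f)(r) := ∫_G T(r,s) f(s) dμ(s); the rank-one kernel ⟨f,g⟩ : G×G → A by ⟨f,g⟩(r,s) := f(r)·g(s)*; and the convolution (S∗T)(r,s) := ∫_G S(r,z) T(z,s) dμ(z). Then for every u ∈ G and all continuous compactly supported T : G×G → A and f, g : G → A, one has β_u(⟨β_{u⁻¹}(T)·f, g⟩) = T ∗ β_u(⟨f,g⟩) as A-valued functions on G×G. -/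
open MeasureTheory

/-- The canonical `G`-action on kernels: `β_u(T)(r,s) := Δ(u) • T(ru, su)`. -/
noncomputable def kernelAct {G A : Type*} [Group G] [AddCommGroup A] [Module ℝ A]
    (Δ : G → ℝ) (u : G) (T : G → G → A) : G → G → A :=
  fun r s => Δ u • T (r * u) (s * u)

/-- The action of a kernel on a function: `(T·f)(r) := ∫ T(r,s) f(s) dμ(s)`. -/
noncomputable def kernelApply {G A : Type*} [MeasurableSpace G]
    [NormedRing A] [NormedSpace ℝ A] [CompleteSpace A]
    (μ : Measure G) (T : G → G → A) (f : G → A) : G → A :=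
  fun r => ∫ s, T r s * f s ∂μ

/-- The rank-one kernel `⟨f,g⟩(r,s) := f(r) ⬝ g(s)*`. -/
def rankOneKernel {G A : Type*} [Mul A] [Star A] (f g : G → A) : G → G → A :=
  fun r s => f r * star (g s)

/-- Convolution of kernels: `(S∗T)(r,s) := ∫ S(r,z) T(z,s) dμ(z)`. -/
noncomputable def kernelConv {G A : Type*} [MeasurableSpace G]
    [NormedRing A] [NormedSpace ℝ A] [CompleteSpace A]
    (μ : Measure G) (S T : G → G → A) : G → G → A :=
  fun r s => ∫ z, S r z * T z s ∂μ

/-- Vector-valued version of the modular-function identity. -/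
lemma key_translate {G A : Type*} [Group G] [TopologicalSpace G] [IsTopologicalGroup G]
    [LocallyCompactSpace G] [T2Space G] [MeasurableSpace G] [BorelSpace G]
    (μ : Measure G) [μ.IsHaarMeasure]
    [NormedAddCommGroup A] [NormedSpace ℝ A] [CompleteSpace A]
    (Δ : G → ℝ)
    (hΔ : ∀ u : G, ∀ h : G → ℝ, Continuous h → HasCompactSupport h →
      ∫ z, h (z * u) ∂μ = (Δ u)⁻¹ * ∫ z, h z ∂μ)
    (u : G) (F : G → A) (hF : Continuous F) (hFc : HasCompactSupport F) :
    ∫ z, F (z * u) ∂μ = (Δ u)⁻¹ • ∫ z, F z ∂μ := by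
  have hFu : Continuous fun z => F (z * u) := hF.comp (continuous_mul_right u)
  have hFuc : HasCompactSupport fun z => F (z * u) :=
    hFc.comp_homeomorph (Homeomorph.mulRight u)
  have hInt : Integrable F μ := hF.integrable_of_hasCompactSupport hFc
  have hIntu : Integrable (fun z => F (z * u)) μ := hFu.integrable_of_hasCompactSupport hFuc
  refine (NormedSpace.eq_iff_forall_dual_eq ℝ).2 fun φ => ?_
  have h1 : φ (∫ z, F (z * u) ∂μ) = ∫ z, φ (F (z * u)) ∂μ :=
    (φ.integral_comp_comm hIntu).symm
  have h2 : φ (∫ z, F z ∂μ) = ∫ z, φ (F z) ∂μ := (φ.integral_comp_comm hInt).symm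
  have h3 := hΔ u (fun z => φ (F z)) (φ.continuous.comp hF)
    (hFc.comp_left (map_zero φ))
  rw [h1, φ.map_smul, smul_eq_mul, h2, h3]

/-- The modular function satisfies `Δ(u⁻¹) = (Δ u)⁻¹`. -/
lemma key_inv {G : Type*} [Group G] [TopologicalSpace G] [IsTopologicalGroup G]
    [LocallyCompactSpace G] [T2Space G] [MeasurableSpace G] [BorelSpace G]
    (μ : Measure G) [μ.IsHaarMeasure]
    (Δ : G → ℝ)
    (hΔ : ∀ u : G, ∀ h : G → ℝ, Continuous h → HasCompactSupport h →
      ∫ z, h (z * u) ∂μ = (Δ u)⁻¹ * ∫ z, h z ∂μ)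
    (u : G) : Δ u⁻¹ = (Δ u)⁻¹ := by
  obtain ⟨h, hc, hnn, h1⟩ := exists_continuous_nonneg_pos (1 : G)
  have hint : 0 < ∫ x, h x ∂μ :=
    h.continuous.integral_pos_of_hasCompactSupport_nonneg_nonzero hc hnn h1
  have e1 := hΔ u (fun z => h (z * u⁻¹)) (h.continuous.comp (continuous_mul_right u⁻¹))
    (hc.comp_homeomorph (Homeomorph.mulRight u⁻¹))
  simp only [mul_inv_cancel_right] at e1
  have e2 := hΔ u⁻¹ h h.continuous hc
  rw [e2] at e1
  have hcanc : ((Δ u)⁻¹ * (Δ u⁻¹)⁻¹) * ∫ x, h x ∂μ = 1 * ∫ x, h x ∂μ := by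
    rw [one_mul, mul_assoc]; exact e1.symm
  have hab : (Δ u)⁻¹ * (Δ u⁻¹)⁻¹ = 1 := mul_right_cancel₀ hint.ne' hcanc
  have h2 : (Δ u⁻¹)⁻¹ = ((Δ u)⁻¹)⁻¹ := eq_inv_of_mul_eq_one_right hab
  calc Δ u⁻¹ = ((Δ u⁻¹)⁻¹)⁻¹ := (inv_inv _).symm
    _ = (((Δ u)⁻¹)⁻¹)⁻¹ := by rw [h2]
    _ = (Δ u)⁻¹ := inv_inv _

/-- Compatibility of the left action of the semidirect-product bundle of the
canonical action on kernels with the left inner product of the canonical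
`L²`-bundle: `β_u(⟨β_{u⁻¹}(T)·f, g⟩) = T ∗ β_u(⟨f,g⟩)`. -/
theorem kernelAct_rankOneKernel_kernelApply_eq_kernelConv
    {G A : Type*} [Group G] [TopologicalSpace G] [IsTopologicalGroup G]
    [LocallyCompactSpace G] [T2Space G] [MeasurableSpace G] [BorelSpace G]
    (μ : Measure G) [μ.IsHaarMeasure]
    [NormedRing A] [StarRing A] [CStarRing A] [NormedAlgebra ℂ A]
    [StarModule ℂ A] [CompleteSpace A]
    (Δ : G → ℝ)
    (hΔ : ∀ u : G, ∀ h : G → ℝ, Continuous h → HasCompactSupport h →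
      ∫ z, h (z * u) ∂μ = (Δ u)⁻¹ * ∫ z, h z ∂μ)
    (u : G) (T : G → G → A) (f g : G → A)
    (hT : Continuous fun p : G × G => T p.1 p.2)
    (hTc : HasCompactSupport fun p : G × G => T p.1 p.2)
    (hf : Continuous f) (hfc : HasCompactSupport f)
    (hg : Continuous g) (hgc : HasCompactSupport g) :
    kernelAct Δ u (rankOneKernel (kernelApply μ (kernelAct Δ u⁻¹ T) f) g)
      = kernelConv μ T (kernelAct Δ u (rankOneKernel f g)) := by
  funext r s
  simp only [kernelAct, rankOneKernel, kernelApply, kernelConv, mul_inv_cancel_right]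
  have hTr : Continuous (T r) := hT.comp (Continuous.prodMk_right r)
  have hTrc : HasCompactSupport (T r) := by
    have hemb : Topology.IsClosedEmbedding (fun z : G => ((r, z) : G × G)) := by
      refine ⟨isEmbedding_prodMkRight r, ?_⟩
      have : Set.range (fun z : G => ((r, z) : G × G)) = {r} ×ˢ (Set.univ : Set G) := by
        ext p; simp [Prod.ext_iff, eq_comm]
      rw [this]
      exact isClosed_singleton.prod isClosed_univ
    exact hTc.comp_isClosedEmbedding hemb
  set st := star (g (s * u)) with hst
  -- integrands
  have hF : Continuous fun z => T r (z * u⁻¹) * f z :=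
    (hTr.comp (continuous_mul_right u⁻¹)).mul hf
  have hFc : HasCompactSupport fun z => T r (z * u⁻¹) * f z :=
    ((hTrc.comp_homeomorph (Homeomorph.mulRight u⁻¹)).mul_right)
  have key := key_translate μ Δ hΔ u (fun z => T r (z * u⁻¹) * f z) hF hFc
  simp only [mul_inv_cancel_right] at key
  -- key : ∫ z, T r z * f (z * u) ∂μ = (Δ u)⁻¹ • ∫ z, T r (z * u⁻¹) * f z ∂μ
  have hG : Continuous fun z => T r z * f (z * u) :=
    hTr.mul (hf.comp (continuous_mul_right u))
  have hGc : HasCompactSupport fun z => T r z * f (z * u) := hTrc.mul_right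
  have hGint : Integrable (fun z => T r z * f (z * u)) μ :=
    hG.integrable_of_hasCompactSupport hGc
  have hmulright : ∫ z, (T r z * f (z * u)) * st ∂μ = (∫ z, T r z * f (z * u) ∂μ) * st := by
    have := ((ContinuousLinearMap.mul ℝ A).flip st).integral_comp_comm hGint
    simpa using this
  calc Δ u • ((∫ z, (Δ u⁻¹ • T r (z * u⁻¹)) * f z ∂μ) * st)
      = Δ u • ((Δ u⁻¹ • ∫ z, T r (z * u⁻¹) * f z ∂μ) * st) := by
        simp only [smul_mul_assoc, integral_smul]
    _ = Δ u • (((Δ u)⁻¹ • ∫ z, T r (z * u⁻¹) * f z ∂μ) * st) := by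
        rw [key_inv μ Δ hΔ u]
    _ = Δ u • ((∫ z, T r z * f (z * u) ∂μ) * st) := by rw [← key]
    _ = Δ u • (∫ z, (T r z * f (z * u)) * st ∂μ) := by rw [hmulright]
    _ = ∫ z, Δ u • ((T r z * f (z * u)) * st) ∂μ := (integral_smul _ _).symm
    _ = ∫ z, T r z * (Δ u • (f (z * u) * st)) ∂μ := by
        congr 1; funext z; rw [mul_smul_comm, mul_assoc]
end
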